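/- If some subset A ⊆ M admits no finite p with Sol(p, A), then the least cardinality λ of such a subset A is an infinite regular cardinal. -/

import Mathlib

universe u

/-- Regularity of the weak non-transitivity cardinal (Shelah 950, Claim n10(1)):
`Sol` relates finite subsets `p` of `M` to arbitrary subsets `A ⊆ M`, is monotone,
transitive, and every finite set is solvable; if some subset admits no finite solver,
then the least cardinality of such a subset is an infinite regular cardinal. -/
theorem stmt_2 {M : Type u}
    (Sol : Finset M → Set M → Prop)
    (hmono : ∀ (p : Finset M) (A B : Set M), Sol p A → B ⊆ A → Sol p B)
    (htrans : ∀ (I : Type u) (pF : I → Finset M) (AF : I → Set M) (q : Finset M),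
      (∀ i, Sol (pF i) (AF i)) → Sol q (⋃ i, (pF i : Set M)) → Sol q (⋃ i, AF i))
    (hfin : ∀ A : Finset M, ∃ p, Sol p (A : Set M))
    (lam : Cardinal.{u})
    (hwit : ∃ A : Set M, Cardinal.mk ↥A = lam ∧ ∀ p, ¬ Sol p A)
    (hleast : ∀ A : Set M, (∀ p, ¬ Sol p A) → lam ≤ Cardinal.mk ↥A) :
    lam.IsRegular := by
  obtain ⟨A, hA, hAns⟩ := hwit
  -- every set of cardinality < lam is solvable
  have hsmall : ∀ B : Set M, Cardinal.mk ↥B < lam → ∃ p, Sol p B := by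
    intro B hB
    by_contra h
    push_neg at h
    exact absurd (hleast B h) (not_le.2 hB)
  -- lam is infinite
  have hinf : Cardinal.aleph0 ≤ lam := by
    by_contra h
    push_neg at h
    have hAfin : A.Finite := by
      rw [← Cardinal.lt_aleph0_iff_set_finite, hA]; exact h
    obtain ⟨p, hp⟩ := hfin hAfin.toFinset
    rw [Set.Finite.coe_toFinset] at hp
    exact hAns p hp
  refine ⟨hinf, ?_⟩
  by_contra hcof
  push_neg at hcof
  have hcof' : lam.ord.cof < lam := hcof
  have hlimit : Order.IsSuccLimit lam.ord := Cardinal.isSuccLimit_ord hinf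
  have hcofinf : Cardinal.aleph0 ≤ lam.ord.cof := Ordinal.aleph0_le_cof.2 hlimit
  have haleph_lt : Cardinal.aleph0 < lam := lt_of_le_of_lt hcofinf hcof'
  -- get an equiv between A and lam.ord.ToType
  have hmk : Cardinal.mk ↥A = Cardinal.mk lam.ord.ToType := by
    rw [hA, Cardinal.mk_toType, Cardinal.card_ord]
  obtain ⟨e⟩ := Cardinal.eq.1 hmk
  -- unbounded set of size cof
  haveI : IsWellOrder lam.ord.ToType (· < ·) := isWellOrder_lt
  obtain ⟨S, hSub, hScard⟩ := Order.cof_eq lam.ord.ToType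
  rw [Ordinal.cof_toType] at hScard
  have hSlt : Cardinal.mk ↥S < lam := by rw [hScard]; exact hcof'
  -- decompose A into initial segments indexed by S
  set AF : ↥S → Set M := fun s => Subtype.val '' (e.symm '' {x | x ≤ (s : lam.ord.ToType)}) with hAF
  have hAFlt : ∀ s : ↥S, Cardinal.mk ↥(AF s) < lam := by
    intro s
    have h1 : Cardinal.mk ↥(AF s) ≤ Cardinal.mk ↥{x | x ≤ (s : lam.ord.ToType)} :=
      le_trans Cardinal.mk_image_le (le_trans Cardinal.mk_image_le le_rfl)
    refine lt_of_le_of_lt h1 ?_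
    have hsub : {x | x ≤ (s : lam.ord.ToType)} ⊆ {x | x < (s : lam.ord.ToType)} ∪ {(s : lam.ord.ToType)} := by
      intro x hx
      rcases (show x ≤ (s : lam.ord.ToType) from hx).lt_or_eq with h | h
      · exact Or.inl h
      · exact Or.inr h
    calc Cardinal.mk ↥{x | x ≤ (s : lam.ord.ToType)}
        ≤ Cardinal.mk ↥({x | x < (s : lam.ord.ToType)} ∪ {(s : lam.ord.ToType)} : Set _) :=
          Cardinal.mk_le_mk_of_subset hsub
      _ ≤ Cardinal.mk ↥{x | x < (s : lam.ord.ToType)} + Cardinal.mk ↥({(s : lam.ord.ToType)} : Set _) :=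
          Cardinal.mk_union_le _ _
      _ < lam := by
          apply Cardinal.add_lt_of_lt hinf
          · exact Cardinal.card_typein_toType_lt lam ↑s
          · rw [Cardinal.mk_singleton]; exact lt_of_lt_of_le Cardinal.one_lt_aleph0 hinf
  -- choose solvers
  choose pF hpF using fun s : ↥S => hsmall (AF s) (hAFlt s)
  -- the union of the solvers is small, hence solvable
  have hBlt : Cardinal.mk ↥(⋃ s : ↥S, ((pF s : Set M))) < lam := by
    refine lt_of_le_of_lt (Cardinal.mk_iUnion_le _) ?_
    apply Cardinal.mul_lt_of_lt hinf hSlt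
    refine lt_of_le_of_lt (ciSup_le' fun s => ?_) haleph_lt
    exact le_of_lt (Set.Finite.lt_aleph0 (pF s).finite_toSet)
  obtain ⟨q, hq⟩ := hsmall _ hBlt
  have hsol : Sol q (⋃ s : ↥S, AF s) := htrans ↥S pF AF q hpF hq
  -- the union of segments is all of A
  have hcover : A ⊆ ⋃ s : ↥S, AF s := by
    intro a ha
    obtain ⟨s, hsS, hs⟩ := hSub (e ⟨a, ha⟩)
    have hle : e ⟨a, ha⟩ ≤ s := hs
    refine Set.mem_iUnion.2 ⟨⟨s, hsS⟩, ?_⟩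
    exact ⟨e.symm (e ⟨a, ha⟩), ⟨e ⟨a, ha⟩, hle, rfl⟩, by simp⟩
  exact hAns q (hmono q _ A hsol hcover)
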